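/- Let Y = ∑_{m ≥ n} 2^{n-m} X_m where (X_m)_{m ≥ n} are independent Poisson random variables with parameters λ_m ≥ 0 satisfying B := ∑_{m ≥ n} 2^{n-m} λ_m < ∞. Then for every A > B, P(Y > A) ≤ (B/A)^A · e^A. -/

import Mathlib

open MeasureTheory ProbabilityTheory
open scoped NNReal ENNReal

/-- Real pgf sum for the Poisson pmf. -/
lemma poisson_pgf_hasSum (r : ℝ≥0) (t : ℝ) :
    HasSum (fun k : ℕ => t ^ k * poissonPMFReal r k) (Real.exp (r * (t - 1))) := by
  have h1 : HasSum (fun k : ℕ => ((r : ℝ) * t) ^ k / (Nat.factorial k)) (Real.exp ((r : ℝ) * t)) := by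
    rw [Real.exp_eq_exp_ℝ]
    exact NormedSpace.expSeries_div_hasSum_exp ((r : ℝ) * t)
  have h2 := h1.mul_left (Real.exp (-(r : ℝ)))
  have heq : (fun k : ℕ => Real.exp (-(r : ℝ)) * (((r : ℝ) * t) ^ k / (Nat.factorial k)))
      = fun k : ℕ => t ^ k * poissonPMFReal r k := by
    funext k
    simp only [poissonPMFReal, mul_pow]
    ring
  rw [heq] at h2
  have he : Real.exp (r * (t - 1)) = Real.exp (-(r : ℝ)) * Real.exp ((r : ℝ) * t) := by
    rw [← Real.exp_add]
    ring_nf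
  rw [he]
  exact h2

/-- pgf of the Poisson distribution, `ℝ≥0∞` version. -/
lemma lintegral_pow_poisson (r : ℝ≥0) (t : ℝ) (ht : 0 ≤ t) :
    ∫⁻ k, (ENNReal.ofReal t) ^ k ∂(poissonMeasure r)
      = ENNReal.ofReal (Real.exp (r * (t - 1))) := by
  rw [MeasureTheory.lintegral_countable' (μ := poissonMeasure r)]
  have h1 : ∀ k : ℕ, (poissonMeasure r) {k} = ENNReal.ofReal (poissonPMFReal r k) := fun k => by
    rw [poissonMeasure_singleton]; rfl
  have h2 : ∀ k : ℕ, (ENNReal.ofReal t) ^ k * (poissonMeasure r) {k}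
      = ENNReal.ofReal (t ^ k * poissonPMFReal r k) := by
    intro k
    rw [h1, ← ENNReal.ofReal_pow ht, ← ENNReal.ofReal_mul (pow_nonneg ht k)]
  simp_rw [h2]
  rw [← ENNReal.ofReal_tsum_of_nonneg (fun k => mul_nonneg (pow_nonneg ht k) poissonPMFReal_nonneg)
    (poisson_pgf_hasSum r t).summable, (poisson_pgf_hasSum r t).tsum_eq]

/-- Expectation of a finite product of independent `ℝ≥0∞`-valued random variables. -/
lemma lintegral_prod_range_of_indep {Ω : Type*} [MeasurableSpace Ω] {P : Measure Ω}
    [IsProbabilityMeasure P] {h : ℕ → Ω → ℝ≥0∞} (hmeas : ∀ m, Measurable (h m))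
    (hind : iIndepFun (m := fun _ : ℕ => (inferInstance : MeasurableSpace ℝ≥0∞)) h P) (N : ℕ) :
    ∫⁻ ω, ∏ m ∈ Finset.range N, h m ω ∂P = ∏ m ∈ Finset.range N, ∫⁻ ω, h m ω ∂P := by
  induction N with
  | zero => simp
  | succ N ih =>
    have hpe : (∏ j ∈ Finset.range N, h j) = fun ω => ∏ j ∈ Finset.range N, h j ω :=
      funext fun ω => Finset.prod_apply ω (Finset.range N) h
    have hPmeas : Measurable (fun ω => ∏ m ∈ Finset.range N, h m ω) :=
      Finset.measurable_prod _ fun i _ => hmeas i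
    have hind2 := hind.indepFun_prod_range_succ hmeas N
    rw [hpe] at hind2
    have := lintegral_mul_eq_lintegral_mul_lintegral_of_indepFun'' (μ := P)
      hPmeas.aemeasurable (hmeas N).aemeasurable hind2
    simp only [Finset.prod_range_succ]
    rw [← ih]
    exact this

/-- Chernoff-type bound for a geometrically weighted sum of independent Poisson
variables: if `Y = ∑_{m ≥ n} 2^{n-m} X_m` with `X_m` independent Poisson of parameters
`λ_m`, and `B = ∑_{m ≥ n} 2^{n-m} λ_m < ∞`, then for every `A > B`,
`P(Y > A) ≤ (B/A)^A e^A`. -/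
theorem poisson_weighted_sum_tail_bound
    {Ω : Type*} [MeasurableSpace Ω] (P : Measure Ω) [IsProbabilityMeasure P]
    (X : ℕ → Ω → ℕ) (hXmeas : ∀ m, Measurable (X m))
    (hindep : iIndepFun (m := fun _ : ℕ => (inferInstance : MeasurableSpace ℕ)) X P)
    (lam : ℕ → ℝ≥0)
    (hdist : ∀ m, Measure.map (X m) P = poissonMeasure (lam m))
    (n : ℕ) (B : ℝ)
    (hBsum : Summable (fun m : ℕ =>
      if n ≤ m then (2 : ℝ) ^ ((n : ℝ) - m) * (lam m : ℝ) else 0))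
    (hB : B = ∑' m : ℕ, if n ≤ m then (2 : ℝ) ^ ((n : ℝ) - m) * (lam m : ℝ) else 0)
    (A : ℝ) (hA : B < A) :
    (P {ω | A < ∑' m : ℕ,
        if n ≤ m then (2 : ℝ) ^ ((n : ℝ) - m) * (X m ω : ℝ) else 0}).toReal
      ≤ (B / A) ^ A * Real.exp A := by
  classical
  -- basic notation
  set f : ℕ → Ω → ℝ := fun m ω => if n ≤ m then (2 : ℝ) ^ ((n : ℝ) - m) * (X m ω : ℝ) else 0
    with hfdef
  set wB : ℕ → ℝ := fun m => if n ≤ m then (2 : ℝ) ^ ((n : ℝ) - m) * (lam m : ℝ) else 0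
    with hwBdef
  have hwBnn : ∀ m, 0 ≤ wB m := by
    intro m
    simp only [hwBdef]
    split
    · positivity
    · exact le_rfl
  have hfnn : ∀ m ω, 0 ≤ f m ω := by
    intro m ω
    simp only [hfdef]
    split
    · positivity
    · exact le_rfl
  have hB0 : 0 ≤ B := by
    rw [hB]
    exact tsum_nonneg hwBnn
  have hApos : 0 < A := lt_of_le_of_lt hB0 hA
  rcases eq_or_lt_of_le hB0 with hBzero | hBpos
  · -- degenerate case B = 0
    have hlam : ∀ m, n ≤ m → lam m = 0 := by
      intro m hm
      have hle : wB m ≤ B := by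
        rw [hB]
        exact Summable.le_tsum hBsum m fun j _ => hwBnn j
      rw [← hBzero] at hle
      have h0 : wB m = 0 := le_antisymm hle (hwBnn m)
      rw [hwBdef] at h0
      simp only [hm, if_true] at h0
      have h2 : (0:ℝ) < (2:ℝ) ^ ((n:ℝ) - m) := Real.rpow_pos_of_pos two_pos _
      have := (mul_eq_zero.mp h0).resolve_left (ne_of_gt h2)
      exact_mod_cast this
    have hXae : ∀ᵐ ω ∂P, ∀ m, n ≤ m → X m ω = 0 := by
      rw [ae_all_iff]
      intro m
      by_cases hm : n ≤ m
      · have h01 : poissonMeasure (lam m) {0} = 1 := by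
          rw [hlam m hm, poissonMeasure_singleton]
          simp
        have hcompl : poissonMeasure (lam m) ({0}ᶜ : Set ℕ) = 0 :=
          (prob_compl_eq_zero_iff (measurableSet_singleton 0)).mpr h01
        have hmap : P (X m ⁻¹' ({0}ᶜ : Set ℕ)) = 0 := by
          rw [← Measure.map_apply (hXmeas m) (measurableSet_singleton 0).compl, hdist m]
          exact hcompl
        have : ∀ᵐ ω ∂P, X m ω = 0 := by
          rw [ae_iff]
          exact hmap
        filter_upwards [this] with ω h _
        exact h
      · filter_upwards with ω h
        exact absurd h hm
    have hP0 : P {ω | A < ∑' m : ℕ,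
        if n ≤ m then (2 : ℝ) ^ ((n : ℝ) - m) * (X m ω : ℝ) else 0} = 0 := by
      refine measure_mono_null ?_ (ae_iff.mp hXae)
      intro ω hω
      simp only [Set.mem_setOf_eq] at hω ⊢
      intro hall
      have hz : (∑' m : ℕ,
          if n ≤ m then (2 : ℝ) ^ ((n : ℝ) - m) * (X m ω : ℝ) else 0) = 0 := by
        have hzz : ∀ m : ℕ,
            (if n ≤ m then (2 : ℝ) ^ ((n : ℝ) - m) * (X m ω : ℝ) else 0) = 0 := by
          intro m
          by_cases hm : n ≤ m
          · simp [hm, hall m hm]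
          · simp [hm]
        rw [tsum_congr hzz, tsum_zero]
      rw [hz] at hω
      exact absurd hω (not_lt.mpr hApos.le)
    rw [hP0]
    rw [← hBzero, zero_div, Real.zero_rpow (ne_of_gt hApos), zero_mul]
    simp
  · -- main case 0 < B
    set s : ℝ := A / B with hsdef
    have hs1 : 1 < s := (one_lt_div hBpos).mpr hA
    have hs0 : 0 < s := lt_trans one_pos hs1
    set w : ℕ → ℝ := fun m => if n ≤ m then (2:ℝ) ^ ((n:ℝ) - m) else 0 with hwdef
    have hw0 : ∀ m, 0 ≤ w m := by
      intro m
      simp only [hwdef]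
      split
      · positivity
      · exact le_rfl
    have hw1 : ∀ m, w m ≤ 1 := by
      intro m
      simp only [hwdef]
      split
      · rename_i hm
        refine Real.rpow_le_one_of_one_le_of_nonpos one_le_two ?_
        have : (n:ℝ) ≤ m := Nat.cast_le.mpr hm
        linarith
      · exact zero_le_one
    set t : ℕ → ℝ := fun m => s ^ (w m) with htdef
    have ht1 : ∀ m, 1 ≤ t m := by
      intro m
      have h := Real.rpow_le_rpow_of_exponent_le hs1.le (hw0 m)
      rw [Real.rpow_zero] at h
      exact h
    have ht0 : ∀ m, 0 ≤ t m := fun m => zero_le_one.trans (ht1 m)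
    have hfw : ∀ m ω, f m ω = w m * (X m ω : ℝ) := by
      intro m ω
      simp only [hfdef, hwdef]
      split
      · rfl
      · simp
    -- key exponent bound
    have hkey : ∀ m, (lam m : ℝ) * (t m - 1) ≤ s * wB m := by
      intro m
      by_cases hm : n ≤ m
      · have hber : t m ≤ 1 + w m * (s - 1) := by
          have h := rpow_one_add_le_one_add_mul_self (s := s - 1)
            (by linarith) (hw0 m) (hw1 m)
          simpa [htdef] using h
        have h1 : t m - 1 ≤ w m * s := by nlinarith [hw0 m]
        have h2 : (lam m : ℝ) * (t m - 1) ≤ (lam m : ℝ) * (w m * s) :=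
          mul_le_mul_of_nonneg_left h1 (lam m).coe_nonneg
        refine h2.trans (le_of_eq ?_)
        simp only [hwdef, hwBdef, hm, if_true]
        ring
      · simp only [htdef, hwdef, hwBdef, hm, if_false, Real.rpow_zero]
        simp
    -- the ENNReal-valued factors
    set h : ℕ → Ω → ℝ≥0∞ := fun m ω => (ENNReal.ofReal (t m)) ^ (X m ω) with hhdef
    have hhmeas : ∀ m, Measurable (h m) := by
      intro m
      exact (measurable_from_top (f := fun k : ℕ => (ENNReal.ofReal (t m)) ^ k)).comp (hXmeas m)
    have hhind : iIndepFun (m := fun _ : ℕ => (inferInstance : MeasurableSpace ℝ≥0∞)) h P := by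
      have := hindep.comp (fun m (k : ℕ) => (ENNReal.ofReal (t m)) ^ k)
        (fun m => measurable_from_top)
      exact this
    have hhint : ∀ m, ∫⁻ ω, h m ω ∂P = ENNReal.ofReal (Real.exp ((lam m : ℝ) * (t m - 1))) := by
      intro m
      calc ∫⁻ ω, h m ω ∂P
          = ∫⁻ k, (ENNReal.ofReal (t m)) ^ k ∂(Measure.map (X m) P) := by
            rw [lintegral_map (f := fun k : ℕ => (ENNReal.ofReal (t m)) ^ k)
              measurable_from_top (hXmeas m)]
        _ = ENNReal.ofReal (Real.exp ((lam m : ℝ) * (t m - 1))) := by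
            rw [hdist m, lintegral_pow_poisson (lam m) (t m) (ht0 m)]
    -- partial sums and their tail events
    set S : ℕ → Ω → ℝ := fun N ω => ∑ m ∈ Finset.range N, f m ω with hSdef
    set E : ℕ → Set Ω := fun N => {ω | A < S N ω} with hEdef
    -- product identity
    have hSG : ∀ N ω, ∏ m ∈ Finset.range N, h m ω = ENNReal.ofReal (s ^ (S N ω)) := by
      intro N ω
      have hstep : ∀ m, h m ω = ENNReal.ofReal (s ^ (f m ω)) := by
        intro m
        show (ENNReal.ofReal (t m)) ^ (X m ω) = ENNReal.ofReal (s ^ (f m ω))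
        rw [← ENNReal.ofReal_pow (ht0 m)]
        congr 1
        show (s ^ (w m)) ^ (X m ω) = s ^ (f m ω)
        rw [hfw, ← Real.rpow_natCast (s ^ w m) (X m ω), ← Real.rpow_mul hs0.le]
      simp_rw [hstep]
      rw [← ENNReal.ofReal_prod_of_nonneg (fun i _ => Real.rpow_nonneg hs0.le _)]
      congr 1
      have hexp : ∀ x : ℝ, s ^ x = Real.exp (Real.log s * x) := fun x =>
        Real.rpow_def_of_pos hs0 x
      simp_rw [hexp]
      rw [← Real.exp_sum, hSdef]
      rw [Finset.mul_sum]
    -- Markov bound for each partial sum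
    have hC : ∀ N : ℕ, P (E N) ≤ ENNReal.ofReal (Real.exp A / s ^ A) := by
      intro N
      have hGmeas : Measurable (fun ω => ∏ m ∈ Finset.range N, h m ω) :=
        Finset.measurable_prod _ fun i _ => hhmeas i
      have hsub : E N ⊆ {ω | ENNReal.ofReal (s ^ A) ≤ ∏ m ∈ Finset.range N, h m ω} := by
        intro ω hω
        simp only [hEdef, Set.mem_setOf_eq] at hω ⊢
        rw [hSG N ω]
        exact ENNReal.ofReal_le_ofReal
          (Real.rpow_le_rpow_of_exponent_le hs1.le hω.le)
      have hne0 : ENNReal.ofReal (s ^ A) ≠ 0 := by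
        simp only [ne_eq, ENNReal.ofReal_eq_zero, not_le]
        exact Real.rpow_pos_of_pos hs0 A
      have hnetop : ENNReal.ofReal (s ^ A) ≠ ⊤ := ENNReal.ofReal_ne_top
      have hmarkov := (measure_mono hsub).trans
        (meas_ge_le_lintegral_div (μ := P) hGmeas.aemeasurable hne0 hnetop)
      -- compute the integral
      have hint : ∫⁻ ω, ∏ m ∈ Finset.range N, h m ω ∂P ≤ ENNReal.ofReal (Real.exp A) := by
        rw [lintegral_prod_range_of_indep hhmeas hhind N]
        simp_rw [hhint]
        rw [← ENNReal.ofReal_prod_of_nonneg (fun i _ => (Real.exp_pos _).le)]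
        refine ENNReal.ofReal_le_ofReal ?_
        rw [← Real.exp_sum]
        refine Real.exp_le_exp.mpr ?_
        calc ∑ m ∈ Finset.range N, (lam m : ℝ) * (t m - 1)
            ≤ ∑ m ∈ Finset.range N, s * wB m := Finset.sum_le_sum fun m _ => hkey m
          _ = s * ∑ m ∈ Finset.range N, wB m := by rw [Finset.mul_sum]
          _ ≤ s * B := by
              refine mul_le_mul_of_nonneg_left ?_ hs0.le
              rw [hB]
              exact Summable.sum_le_tsum (Finset.range N) (fun i _ => hwBnn i) hBsum
          _ = A := by
              rw [hsdef]
              field_simp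
      refine hmarkov.trans ?_
      refine le_trans (ENNReal.div_le_div_right hint _) ?_
      rw [← ENNReal.ofReal_div_of_pos (Real.rpow_pos_of_pos hs0 A)]
    -- pass to the limit
    have hmono : Monotone E := by
      intro N M hNM ω hω
      simp only [hEdef, Set.mem_setOf_eq, hSdef] at hω ⊢
      refine lt_of_lt_of_le hω ?_
      exact Finset.sum_le_sum_of_subset_of_nonneg
        (Finset.range_subset_range.mpr hNM) (fun i _ _ => hfnn i ω)
    have hsubU : {ω | A < ∑' m : ℕ,
        if n ≤ m then (2 : ℝ) ^ ((n : ℝ) - m) * (X m ω : ℝ) else 0} ⊆ ⋃ N, E N := by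
      intro ω hω
      simp only [Set.mem_setOf_eq] at hω
      have hω' : A < ∑' m : ℕ, f m ω := hω
      by_cases hsumm : Summable (fun m => f m ω)
      · have htend := hsumm.hasSum.tendsto_sum_nat
        have hev := htend.eventually (eventually_gt_nhds hω')
        obtain ⟨N, hN⟩ := hev.exists
        exact Set.mem_iUnion.mpr ⟨N, hN⟩
      · rw [tsum_eq_zero_of_not_summable hsumm] at hω'
        exact absurd hω' (not_lt.mpr hApos.le)
    have hPle : P {ω | A < ∑' m : ℕ,
        if n ≤ m then (2 : ℝ) ^ ((n : ℝ) - m) * (X m ω : ℝ) else 0}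
        ≤ ENNReal.ofReal (Real.exp A / s ^ A) := by
      refine (measure_mono hsubU).trans ?_
      rw [hmono.measure_iUnion]
      exact iSup_le hC
    -- conclude
    have hfinal : Real.exp A / s ^ A = (B / A) ^ A * Real.exp A := by
      have hBA : B / A = (A / B)⁻¹ := by
        rw [inv_div]
      rw [hBA, Real.inv_rpow (by positivity), ← hsdef]
      rw [div_eq_mul_inv, mul_comm]
    rw [hfinal] at hPle
    exact ENNReal.toReal_le_of_le_ofReal (by positivity) hPle
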